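/- A nonzero function W(x) = a₁(cos βx − cosh βx) + a₂(sin βx − sinh βx) satisfies the free-end conditions W''(L) = 0 and W'''(L) = 0 for some (a₁,a₂) ≠ (0,0) if and only if cos(βL)·cosh(βL) = −1. -/

import Mathlib

open Real

lemma derivG (β a b c d : ℝ) :
    deriv (fun x => a * Real.cos (β*x) + b * Real.sin (β*x)
        + c * Real.cosh (β*x) + d * Real.sinh (β*x))
    = fun x => (b*β) * Real.cos (β*x) + (-(a*β)) * Real.sin (β*x)
        + (d*β) * Real.cosh (β*x) + (c*β) * Real.sinh (β*x) := by
  funext x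
  have hx : HasDerivAt (fun x : ℝ => β*x) β x := by
    simpa using (hasDerivAt_id x).const_mul β
  have hc : HasDerivAt (fun x => Real.cos (β*x)) (-Real.sin (β*x) * β) x :=
    (Real.hasDerivAt_cos (β*x)).comp x hx
  have hs : HasDerivAt (fun x => Real.sin (β*x)) (Real.cos (β*x) * β) x :=
    (Real.hasDerivAt_sin (β*x)).comp x hx
  have hch : HasDerivAt (fun x => Real.cosh (β*x)) (Real.sinh (β*x) * β) x :=
    (Real.hasDerivAt_cosh (β*x)).comp x hx
  have hsh : HasDerivAt (fun x => Real.sinh (β*x)) (Real.cosh (β*x) * β) x :=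
    (Real.hasDerivAt_sinh (β*x)).comp x hx
  have H := (((hc.const_mul a).add (hs.const_mul b)).add (hch.const_mul c)).add
    (hsh.const_mul d)
  have := H.deriv
  exact this.trans (by ring)

theorem stmt_3 (β L : ℝ) (hβ : 0 < β) (hL : 0 < L) :
    (∃ a₁ a₂ : ℝ, (a₁, a₂) ≠ (0, 0) ∧
      iteratedDeriv 2 (fun x => a₁ * (Real.cos (β*x) - Real.cosh (β*x))
                        + a₂ * (Real.sin (β*x) - Real.sinh (β*x))) L = 0 ∧
      iteratedDeriv 3 (fun x => a₁ * (Real.cos (β*x) - Real.cosh (β*x))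
                        + a₂ * (Real.sin (β*x) - Real.sinh (β*x))) L = 0)
    ↔ Real.cos (β*L) * Real.cosh (β*L) = -1 := by
  set c := Real.cos (β*L)
  set s := Real.sin (β*L)
  set ch := Real.cosh (β*L)
  set sh := Real.sinh (β*L)
  have hpy : s^2 + c^2 = 1 := Real.sin_sq_add_cos_sq _
  have hhy : ch^2 - sh^2 = 1 := Real.cosh_sq_sub_sinh_sq _
  have hkey : ∀ a₁ a₂ : ℝ,
      iteratedDeriv 2 (fun x => a₁ * (Real.cos (β*x) - Real.cosh (β*x))
                        + a₂ * (Real.sin (β*x) - Real.sinh (β*x))) L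
        = β^2 * (-(a₁*(c+ch)) - a₂*(s+sh)) ∧
      iteratedDeriv 3 (fun x => a₁ * (Real.cos (β*x) - Real.cosh (β*x))
                        + a₂ * (Real.sin (β*x) - Real.sinh (β*x))) L
        = β^3 * (a₁*(s-sh) - a₂*(c+ch)) := by
    intro a₁ a₂
    have hf : (fun x => a₁ * (Real.cos (β*x) - Real.cosh (β*x))
                        + a₂ * (Real.sin (β*x) - Real.sinh (β*x)))
        = fun x => a₁ * Real.cos (β*x) + a₂ * Real.sin (β*x)
            + (-a₁) * Real.cosh (β*x) + (-a₂) * Real.sinh (β*x) := by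
      funext x; ring
    have h2d : ∀ g : ℝ → ℝ, iteratedDeriv 2 g = deriv (deriv g) := by
      intro g
      rw [show (2:ℕ) = 1 + 1 from rfl, iteratedDeriv_succ, iteratedDeriv_one]
    have h3d : ∀ g : ℝ → ℝ, iteratedDeriv 3 g = deriv (deriv (deriv g)) := by
      intro g
      rw [show (3:ℕ) = 2 + 1 from rfl, iteratedDeriv_succ, h2d]
    rw [hf, h2d, h3d, derivG, derivG, derivG]
    constructor <;> ring
  constructor
  · rintro ⟨a₁, a₂, hne, h2, h3⟩
    rw [(hkey a₁ a₂).1] at h2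
    rw [(hkey a₁ a₂).2] at h3
    have hβ2 : β^2 ≠ 0 := pow_ne_zero _ (ne_of_gt hβ)
    have hβ3 : β^3 ≠ 0 := pow_ne_zero _ (ne_of_gt hβ)
    have e1 : a₁*(c+ch) + a₂*(s+sh) = 0 := by
      have := (mul_eq_zero.mp h2).resolve_left hβ2; linarith
    have e2 : a₁*(s-sh) - a₂*(c+ch) = 0 := (mul_eq_zero.mp h3).resolve_left hβ3
    have hD : (c+ch)^2 + (s+sh)*(s-sh) = 0 := by
      have h : ¬ (a₁ = 0 ∧ a₂ = 0) := by
        intro ⟨u, v⟩; exact hne (by rw [u, v])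
      by_cases ha : a₁ = 0
      · have ha2 : a₂ ≠ 0 := fun hb => h ⟨ha, hb⟩
        have := mul_left_cancel₀ ha2 (show a₂ * ((c+ch)^2 + (s+sh)*(s-sh)) = a₂ * 0 by
          linear_combination (s-sh)*e1 - (c+ch)*e2)
        simpa using this
      · have := mul_left_cancel₀ ha (show a₁ * ((c+ch)^2 + (s+sh)*(s-sh)) = a₁ * 0 by
          linear_combination (c+ch)*e1 + (s+sh)*e2)
        simpa using this
    linear_combination hD/2 - hpy/2 - hhy/2
  · intro h
    refine ⟨c + ch, s - sh, ?_, ?_, ?_⟩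
    · intro hz
      have h1 : c + ch = 0 := congrArg Prod.fst hz
      have hgt : 1 < ch := Real.one_lt_cosh.mpr (ne_of_gt (mul_pos hβ hL))
      have hc1 : -1 ≤ c := Real.neg_one_le_cos _
      linarith
    · rw [(hkey _ _).1]
      linear_combination (-2*β^2)*h - β^2*hpy - β^2*hhy
    · rw [(hkey _ _).2]; ring
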